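/- In the field of rational functions in q, define F(n,k) = (-1)^k q^{(k-2)(k-2n+1)} [4n-1] (q^{-1};q^2)_n^3 (q^{-1};q^2)_{n+k} / ((q^2;q^2)_n^3 (q^2;q^2)_{n-k} (q^{-1};q^2)_k^2) and G(n,k) = (-1)^{k-1} q^{(k-2)(k-2n+3)} (q^{-1};q^2)_n^3 (q^{-1};q^2)_{n+k-1} / ((1-q)^2 (q^2;q^2)_{n-1}^3 (q^2;q^2)_{n-k} (q^{-1};q^2)_k^2), with the convention 1/(q^2;q^2)_m = 0 for negative integers m. Then [2k-3]F(n,k-1) - [2k-4]F(n,k) = G(n+1,k) - G(n,k) for all integers n ≥ 0 and all integers k. -/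

import Mathlib

open RatFunc

noncomputable def q : RatFunc ℚ := RatFunc.X

/-- q-shifted factorial `(a;b)_m = (1-a)(1-ab)⋯(1-ab^{m-1})` for `m ≥ 0`, extended to
negative `m` by `(a;b)_m = 1/((1-a/b)(1-a/b²)⋯(1-a b^m))`; with Lean's `0⁻¹ = 0`
this realizes the convention `1/(q²;q²)_m = 0` for negative `m`. -/
noncomputable def qpochZ (a b : RatFunc ℚ) (m : ℤ) : RatFunc ℚ :=
  if 0 ≤ m then ∏ j ∈ Finset.range m.toNat, (1 - a * b ^ j)
  else (∏ j ∈ Finset.range (-m).toNat, (1 - a * b ^ (-(j : ℤ) - 1)))⁻¹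

/-- q-integer `[m] = (1-q^m)/(1-q)`, for arbitrary integer `m`. -/
noncomputable def qintZ (m : ℤ) : RatFunc ℚ := (1 - q ^ m) / (1 - q)

noncomputable def Fqwz (n : ℕ) (k : ℤ) : RatFunc ℚ :=
  (-1 : RatFunc ℚ) ^ k * q ^ ((k - 2) * (k - 2 * (n : ℤ) + 1)) * qintZ (4 * n - 1) *
      qpochZ q⁻¹ (q ^ 2) n ^ 3 * qpochZ q⁻¹ (q ^ 2) ((n : ℤ) + k) /
    (qpochZ (q ^ 2) (q ^ 2) n ^ 3 * qpochZ (q ^ 2) (q ^ 2) ((n : ℤ) - k) *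
      qpochZ q⁻¹ (q ^ 2) k ^ 2)

noncomputable def Gqwz (n : ℕ) (k : ℤ) : RatFunc ℚ :=
  (-1 : RatFunc ℚ) ^ (k - 1) * q ^ ((k - 2) * (k - 2 * (n : ℤ) + 3)) *
      qpochZ q⁻¹ (q ^ 2) n ^ 3 * qpochZ q⁻¹ (q ^ 2) ((n : ℤ) + k - 1) /
    ((1 - q) ^ 2 * qpochZ (q ^ 2) (q ^ 2) ((n : ℤ) - 1) ^ 3 *
      qpochZ (q ^ 2) (q ^ 2) ((n : ℤ) - k) * qpochZ q⁻¹ (q ^ 2) k ^ 2)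

lemma q_ne : q ≠ 0 := RatFunc.X_ne_zero

lemma q_zpow_ne_one {m : ℤ} (hm : m ≠ 0) : q ^ m ≠ 1 := by
  have key : ∀ l : ℕ, l ≠ 0 → q ^ (l:ℤ) ≠ 1 := by
    intro l hl
    rw [zpow_natCast]
    unfold q
    rw [← RatFunc.algebraMap_X (K := ℚ), ← map_pow]
    intro h
    have h2 := RatFunc.algebraMap_injective ℚ (h.trans (map_one _).symm)
    have h3 := congrArg Polynomial.natDegree h2
    simp [Polynomial.natDegree_X_pow] at h3
    exact hl h3
  rcases lt_trichotomy m 0 with h|h|h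
  · intro hc
    have h1 : q ^ (-m) = 1 := by rw [zpow_neg, hc, inv_one]
    have h2 := key (-m).toNat (by omega)
    rw [Int.toNat_of_nonneg (by omega)] at h2
    exact h2 h1
  · omega
  · have := key m.toNat (by omega)
    rwa [Int.toNat_of_nonneg (by omega)] at this

lemma one_sub_q_zpow_ne {m : ℤ} (hm : m ≠ 0) : (1 : RatFunc ℚ) - q ^ m ≠ 0 := by
  intro h
  exact q_zpow_ne_one hm (by linear_combination -h)

lemma one_sub_q_ne : (1 : RatFunc ℚ) - q ≠ 0 := by
  have := one_sub_q_zpow_ne (m := 1) one_ne_zero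
  rwa [zpow_one] at this

lemma qpochZ_step (a b : RatFunc ℚ) (m : ℤ) (h : (1 : RatFunc ℚ) - a * b ^ m ≠ 0) :
    qpochZ a b (m + 1) = qpochZ a b m * (1 - a * b ^ m) := by
  unfold qpochZ
  rcases lt_trichotomy m (-1) with hm|hm|hm
  · rw [if_neg (by omega), if_neg (by omega)]
    have h1 : (-m).toNat = (-(m+1)).toNat + 1 := by omega
    rw [h1, Finset.prod_range_succ]
    have h2 : (-((-(m+1)).toNat : ℤ) - 1) = m := by omega
    rw [h2, mul_inv, inv_mul_cancel_right₀ h]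
  · subst hm
    rw [if_pos (by omega), if_neg (by omega)]
    norm_num
    rw [inv_mul_cancel₀]
    convert h using 3
    norm_num
  · rw [if_pos (by omega), if_pos (by omega)]
    have h1 : (m+1).toNat = m.toNat + 1 := by omega
    rw [h1, Finset.prod_range_succ]
    congr 2
    rw [← zpow_natCast b m.toNat, Int.toNat_of_nonneg (by omega)]

lemma qpochZ_q2_neg {m : ℤ} (hm : m < 0) : qpochZ (q^2) (q^2) m = 0 := by
  unfold qpochZ
  rw [if_neg (by omega)]
  rw [Finset.prod_eq_zero (i := 0) (by simp; omega)]
  · simp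
  · show (1:RatFunc ℚ) - q^2 * (q^2) ^ (-(0:ℤ) - 1) = 0
    have : ((q:RatFunc ℚ)^2) ^ (-(0:ℤ)-1) = (q^2)⁻¹ := by norm_num
    rw [this, mul_inv_cancel₀ (pow_ne_zero 2 q_ne)]
    ring

lemma q2_zpow (m : ℤ) : ((q:RatFunc ℚ)^2) ^ m = q ^ (2*m) := by
  rw [← zpow_natCast q 2, ← zpow_mul]
  norm_num

lemma qpochZ_zero (a b : RatFunc ℚ) : qpochZ a b 0 = 1 := by unfold qpochZ; simp

lemma step_inv (m : ℤ) :
    qpochZ q⁻¹ (q^2) (m+1) = qpochZ q⁻¹ (q^2) m * (1 - q^(2*m-1)) := by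
  have hfac : (q⁻¹ : RatFunc ℚ) * ((q:RatFunc ℚ)^2)^m = q^(2*m-1) := by
    rw [q2_zpow, ← zpow_neg_one, ← zpow_add₀ q_ne]
    congr 1; ring
  rw [qpochZ_step _ _ m (by rw [hfac]; exact one_sub_q_zpow_ne (by omega)), hfac]

lemma step_q2 (m : ℤ) (hm : m ≠ -1) :
    qpochZ (q^2) (q^2) (m+1) = qpochZ (q^2) (q^2) m * (1 - q^(2*m+2)) := by
  have hfac : ((q:RatFunc ℚ)^2) * ((q:RatFunc ℚ)^2)^m = q^(2*m+2) := by
    rw [q2_zpow, ← zpow_natCast q 2, ← zpow_add₀ q_ne]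
    congr 1; ring
  rw [qpochZ_step _ _ m (by rw [hfac]; exact one_sub_q_zpow_ne (by omega)), hfac]

lemma qpochZ_q2_pred (n : ℕ) :
    qpochZ (q^2) (q^2) ((n:ℤ)-1) = qpochZ (q^2) (q^2) (n:ℤ) / (1 - q^(2*(n:ℤ))) := by
  cases n with
  | zero =>
    simp only [Nat.cast_zero, zero_sub, mul_zero, zpow_zero, sub_self, div_zero]
    exact qpochZ_q2_neg (by norm_num)
  | succ m =>
    have h1 : ((m+1:ℕ):ℤ) - 1 = (m:ℤ) := by push_cast; ring
    have h2 : ((m+1:ℕ):ℤ) = (m:ℤ) + 1 := by push_cast; ring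
    rw [h1, h2, step_q2 m (by omega), eq_div_iff (one_sub_q_zpow_ne (by omega))]
    congr 3

lemma q_split (x y : ℤ) : q ^ (x + y) = q ^ x * q ^ y := zpow_add₀ q_ne x y

lemma q_pow_nat (x : ℤ) (e : ℕ) : (q ^ x) ^ e = q ^ (x * e) := by
  rw [← zpow_natCast (q^x) e, ← zpow_mul]

lemma hP3gen (k : ℤ) :
    qpochZ q⁻¹ (q^2) k = qpochZ q⁻¹ (q^2) (k-1) * (1 - q^(2*k-3)) := by
  have h := step_inv (k-1)
  rw [show k-1+1 = k from by ring, show 2*(k-1)-1 = 2*k-3 from by ring] at h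
  exact h

set_option maxHeartbeats 2000000 in
theorem q_wz_pair_relation (n : ℕ) (k : ℤ) :
    qintZ (2 * k - 3) * Fqwz n (k - 1) - qintZ (2 * k - 4) * Fqwz n k
      = Gqwz (n + 1) k - Gqwz n k := by
  rcases lt_trichotomy k ((n:ℤ)+1) with hk | hk | hk
  · -- generic case k ≤ n
    set T : RatFunc ℚ := (-1 : RatFunc ℚ)^(k-1) * q^((k-3)*(k-2*(n:ℤ))) *
        qpochZ q⁻¹ (q^2) (n:ℤ) ^3 * qpochZ q⁻¹ (q^2) ((n:ℤ)+k-1) /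
      (qpochZ (q^2) (q^2) (n:ℤ) ^3 * qpochZ (q^2) (q^2) ((n:ℤ)-k) *
        qpochZ q⁻¹ (q^2) (k-1) ^2) with hT
    have hF1 : qintZ (2*k-3) * Fqwz n (k-1)
        = T * ((1 - q^(2*k-3)) * (1 - q^(4*(n:ℤ)-1)) /
            ((1-q)^2 * (1 - q^(2*(n:ℤ)-2*k+2)))) := by
      simp only [Fqwz, qintZ, hT]
      rw [show (k-1-2)*(k-1-2*(n:ℤ)+1) = (k-3)*(k-2*(n:ℤ)) from by ring,
        show (n:ℤ) + (k-1) = (n:ℤ)+k-1 from by ring,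
        show (n:ℤ) - (k-1) = ((n:ℤ)-k)+1 from by ring,
        step_q2 ((n:ℤ)-k) (by omega),
        show 2*((n:ℤ)-k)+2 = 2*(n:ℤ)-2*k+2 from by ring]
      simp only [div_eq_mul_inv, mul_inv, mul_pow, ← inv_pow, inv_inv]
      ring
    have hF2 : qintZ (2*k-4) * Fqwz n k
        = T * (-((1 - q^(2*k-4)) * q^(2*k-2*(n:ℤ)-2) * (1 - q^(4*(n:ℤ)-1)) *
            (1 - q^(2*(n:ℤ)+2*k-3)) / ((1-q)^2 * (1 - q^(2*k-3))^2))) := by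
      simp only [Fqwz, qintZ, hT]
      have hsgn : ((-1:RatFunc ℚ))^k = (-1)^(k-1) * (-1) := by
        rw [← zpow_add_one₀ (by norm_num : (-1:RatFunc ℚ) ≠ 0) (k-1)]
        norm_num
      rw [hsgn,
        show (k-2)*(k-2*(n:ℤ)+1) = (k-3)*(k-2*(n:ℤ)) + (2*k-2*(n:ℤ)-2) from by ring,
        q_split,
        show (n:ℤ) + k = ((n:ℤ)+k-1)+1 from by ring,
        step_inv ((n:ℤ)+k-1),
        show 2*((n:ℤ)+k-1)-1 = 2*(n:ℤ)+2*k-3 from by ring,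
        hP3gen k]
      simp only [div_eq_mul_inv, mul_inv, mul_pow, ← inv_pow, inv_inv]
      ring
    have hG1 : Gqwz (n+1) k
        = T * (q^(2*k-2*(n:ℤ)-2) * (1 - q^(2*(n:ℤ)-1))^3 * (1 - q^(2*(n:ℤ)+2*k-3)) /
            ((1-q)^2 * (1 - q^(2*(n:ℤ)-2*k+2)) * (1 - q^(2*k-3))^2)) := by
      simp only [Gqwz, hT]
      push_cast
      rw [show (k-2)*(k-2*((n:ℤ)+1)+3) = (k-3)*(k-2*(n:ℤ)) + (2*k-2*(n:ℤ)-2) from by ring,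
        q_split,
        step_inv (n:ℤ),
        show (n:ℤ)+1+k-1 = ((n:ℤ)+k-1)+1 from by ring,
        step_inv ((n:ℤ)+k-1),
        show 2*((n:ℤ)+k-1)-1 = 2*(n:ℤ)+2*k-3 from by ring,
        show (n:ℤ)+1-1 = (n:ℤ) from by ring,
        show (n:ℤ)+1-k = ((n:ℤ)-k)+1 from by ring,
        step_q2 ((n:ℤ)-k) (by omega),
        show 2*((n:ℤ)-k)+2 = 2*(n:ℤ)-2*k+2 from by ring,
        hP3gen k]
      simp only [div_eq_mul_inv, mul_inv, mul_pow, ← inv_pow, inv_inv]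
      ring
    have hG2 : Gqwz n k
        = T * (q^(4*k-2*(n:ℤ)-6) * (1 - q^(2*(n:ℤ)))^3 /
            ((1-q)^2 * (1 - q^(2*k-3))^2)) := by
      simp only [Gqwz, hT]
      rw [show (k-2)*(k-2*(n:ℤ)+3) = (k-3)*(k-2*(n:ℤ)) + (4*k-2*(n:ℤ)-6) from by ring,
        q_split,
        qpochZ_q2_pred n,
        hP3gen k]
      simp only [div_eq_mul_inv, mul_inv, mul_pow, ← inv_pow, inv_inv]
      ring
    suffices key : ((1 - q^(2*k-3)) * (1 - q^(4*(n:ℤ)-1)) /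
            ((1-q)^2 * (1 - q^(2*(n:ℤ)-2*k+2))))
        - (-((1 - q^(2*k-4)) * q^(2*k-2*(n:ℤ)-2) * (1 - q^(4*(n:ℤ)-1)) *
            (1 - q^(2*(n:ℤ)+2*k-3)) / ((1-q)^2 * (1 - q^(2*k-3))^2)))
        = (q^(2*k-2*(n:ℤ)-2) * (1 - q^(2*(n:ℤ)-1))^3 * (1 - q^(2*(n:ℤ)+2*k-3)) /
            ((1-q)^2 * (1 - q^(2*(n:ℤ)-2*k+2)) * (1 - q^(2*k-3))^2))
        - (q^(4*k-2*(n:ℤ)-6) * (1 - q^(2*(n:ℤ)))^3 /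
            ((1-q)^2 * (1 - q^(2*k-3))^2)) by
      rw [hF1, hF2, hG1, hG2, ← mul_sub T, ← mul_sub T, key]
    set A : RatFunc ℚ := q ^ ((n:ℤ)) with hA
    set B : RatFunc ℚ := q ^ k with hB
    have hA0 : A ≠ 0 := zpow_ne_zero _ q_ne
    have hB0 : B ≠ 0 := zpow_ne_zero _ q_ne
    have qeq : ∀ x y : ℤ, x = y → q ^ x = q ^ y := fun x y h => by rw [h]
    have edec : ∀ (a b c d e f : ℕ) (x : ℤ),
        x = (n:ℤ)*a + k*b + c - ((n:ℤ)*d + k*e + f) →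
        q ^ x = A^a * B^b * q^c / (A^d * B^e * q^f) := by
      intro a b c d e f x hx
      rw [hA, hB, q_pow_nat, q_pow_nat, q_pow_nat, q_pow_nat,
        ← zpow_natCast q c, ← zpow_natCast q f, ← q_split, ← q_split, ← q_split, ← q_split,
        ← zpow_sub₀ q_ne, hx]
      all_goals exact qeq _ _ (by push_cast; ring)
    have e_u := edec 2 0 2 0 2 0 (2*(n:ℤ)-2*k+2) (by push_cast; ring)
    have e_v := edec 0 2 0 0 0 3 (2*k-3) (by push_cast; ring)
    have e_w := edec 4 0 0 0 0 1 (4*(n:ℤ)-1) (by push_cast; ring)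
    have e_s := edec 2 2 0 0 0 3 (2*(n:ℤ)+2*k-3) (by push_cast; ring)
    have e_t1 := edec 0 2 0 2 0 2 (2*k-2*(n:ℤ)-2) (by push_cast; ring)
    have e_t2 := edec 0 2 0 0 0 4 (2*k-4) (by push_cast; ring)
    have e_n1 := edec 2 0 0 0 0 1 (2*(n:ℤ)-1) (by push_cast; ring)
    have e_n2 := edec 2 0 0 0 0 0 (2*(n:ℤ)) (by push_cast; ring)
    have e_t5 := edec 0 4 0 2 0 6 (4*k-2*(n:ℤ)-6) (by push_cast; ring)
    have h_u : (1:RatFunc ℚ) - q ^ (2*(n:ℤ)-2*k+2) ≠ 0 := one_sub_q_zpow_ne (by omega)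
    have h_v : (1:RatFunc ℚ) - q ^ (2*k-3) ≠ 0 := one_sub_q_zpow_ne (by omega)
    rw [e_u] at h_u
    rw [e_v] at h_v
    rw [e_u, e_v, e_w, e_s, e_t1, e_t2, e_n1, e_n2, e_t5]
    simp only [pow_zero, one_mul, mul_one, pow_one, div_one] at h_u h_v ⊢
    rw [sub_neg_eq_add]
    field_simp [hA0, hB0, q_ne, one_sub_q_ne, h_u, h_v]
    have hBA : B^2 - A^2*q^2 ≠ 0 := by
      have he : B^2 - A^2*q^2 = B^2 * (1 - A^2*q^2/B^2) := by
        field_simp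
      rw [he]
      exact mul_ne_zero (pow_ne_zero _ hB0) h_u
    have hqB : (q:RatFunc ℚ)^3 - B^2 ≠ 0 := by
      have he : (q:RatFunc ℚ)^3 - B^2 = q^3 * (1 - B^2/q^3) := by
        rw [mul_sub, mul_one, mul_div_cancel₀ _ (pow_ne_zero _ q_ne)]
      rw [he]
      exact mul_ne_zero (pow_ne_zero _ q_ne) h_v
    have nz1 : (q:RatFunc ℚ) ^ 3 * q * ((1 - q) ^ 2 * (B ^ 2 - A ^ 2 * q ^ 2)) ≠ 0 :=
      mul_ne_zero (mul_ne_zero (pow_ne_zero _ q_ne) q_ne)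
        (mul_ne_zero (pow_ne_zero _ one_sub_q_ne) hBA)
    have nz2 : (q:RatFunc ℚ) ^ 4 * (A ^ 2 * q ^ 2) * q * q ^ 3 *
        ((1 - q) ^ 2 * (q ^ 3 - B ^ 2) ^ 2) ≠ 0 :=
      mul_ne_zero (mul_ne_zero (mul_ne_zero (mul_ne_zero (pow_ne_zero _ q_ne)
        (mul_ne_zero (pow_ne_zero _ hA0) (pow_ne_zero _ q_ne))) q_ne) (pow_ne_zero _ q_ne))
        (mul_ne_zero (pow_ne_zero _ one_sub_q_ne) (pow_ne_zero _ hqB))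
    have nz3 : A ^ 2 * q ^ 2 * q ^ 3 * q ^ 3 *
        ((1 - q) ^ 2 * (B ^ 2 - A ^ 2 * q ^ 2) * (q ^ 3 - B ^ 2) ^ 2) ≠ 0 :=
      mul_ne_zero (mul_ne_zero (mul_ne_zero (mul_ne_zero (pow_ne_zero _ hA0)
        (pow_ne_zero _ q_ne)) (pow_ne_zero _ q_ne)) (pow_ne_zero _ q_ne))
        (mul_ne_zero (mul_ne_zero (pow_ne_zero _ one_sub_q_ne) hBA) (pow_ne_zero _ hqB))
    have nz4 : A ^ 2 * q ^ 6 * ((1 - q) ^ 2 * (q ^ 3 - B ^ 2) ^ 2) ≠ 0 :=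
      mul_ne_zero (mul_ne_zero (pow_ne_zero _ hA0) (pow_ne_zero _ q_ne))
        (mul_ne_zero (pow_ne_zero _ one_sub_q_ne) (pow_ne_zero _ hqB))
    have hBA' : B ^ 2 - q ^ 2 * A ^ 2 ≠ 0 := by rw [mul_comm]; exact hBA
    field_simp
    ring
  · -- boundary case k = n + 1
    subst hk
    have z : qpochZ (q^2) (q^2) ((n:ℤ) - ((n:ℤ)+1)) = 0 := qpochZ_q2_neg (by omega)
    have hF0 : Fqwz n ((n:ℤ)+1) = 0 := by
      simp only [Fqwz]
      rw [show (n:ℤ) - ((n:ℤ)+1) = (-1:ℤ) from by ring,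
        qpochZ_q2_neg (by norm_num : (-1:ℤ) < 0)]
      simp
    have hG0 : Gqwz n ((n:ℤ)+1) = 0 := by
      simp only [Gqwz]
      rw [show (n:ℤ) - ((n:ℤ)+1) = (-1:ℤ) from by ring,
        qpochZ_q2_neg (by norm_num : (-1:ℤ) < 0)]
      simp
    rw [hF0, hG0, mul_zero, sub_zero, sub_zero]
    simp only [Fqwz, Gqwz, qintZ]
    push_cast
    rw [show (n:ℤ)+1-1 = (n:ℤ) from by ring,
      show (n:ℤ) + (n:ℤ) = 2*(n:ℤ) from by ring,
      show (n:ℤ)+1+((n:ℤ)+1)-1 = 2*(n:ℤ)+1 from by ring,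
      step_inv (2*(n:ℤ)),
      show 2*(2*(n:ℤ))-1 = 4*(n:ℤ)-1 from by ring,
      show (n:ℤ) - (n:ℤ) = (0:ℤ) from by ring,
      show (n:ℤ)+1-((n:ℤ)+1) = (0:ℤ) from by ring,
      qpochZ_zero,
      step_inv (n:ℤ),
      show ((n:ℤ)-2)*((n:ℤ)-2*(n:ℤ)+1) = ((n:ℤ)-1)*(2-(n:ℤ)) from by ring,
      show ((n:ℤ)+1-2)*((n:ℤ)+1-2*((n:ℤ)+1)+3) = ((n:ℤ)-1)*(2-(n:ℤ)) from by ring,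
      show 2*((n:ℤ)+1)-3 = 2*(n:ℤ)-1 from by ring]
    have hx2 : ((1:RatFunc ℚ) - q^(2*(n:ℤ)-1))^2 ≠ 0 :=
      pow_ne_zero _ (one_sub_q_zpow_ne (by omega))
    trans ((-1:RatFunc ℚ)^((n:ℤ)) * q^(((n:ℤ)-1)*(2-(n:ℤ))) * (1 - q^(2*(n:ℤ)-1)) *
        (1 - q^(4*(n:ℤ)-1)) * qpochZ q⁻¹ (q^2) (n:ℤ) ^3 * qpochZ q⁻¹ (q^2) (2*(n:ℤ)) /
      ((1-q)^2 * qpochZ (q^2) (q^2) (n:ℤ) ^3 * qpochZ q⁻¹ (q^2) (n:ℤ) ^2))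
    · simp only [div_eq_mul_inv, mul_inv, mul_pow, ← inv_pow, inv_inv]
      ring
    rw [← mul_div_mul_right _ _ hx2]
    simp only [div_eq_mul_inv, mul_inv, mul_pow, ← inv_pow, inv_inv]
    ring
  · -- k ≥ n + 2 : everything vanishes
    have z1 : qpochZ (q^2) (q^2) ((n:ℤ) - (k-1)) = 0 := qpochZ_q2_neg (by omega)
    have z2 : qpochZ (q^2) (q^2) ((n:ℤ) - k) = 0 := qpochZ_q2_neg (by omega)
    have z3 : qpochZ (q^2) (q^2) ((n:ℤ)+1-k) = 0 := qpochZ_q2_neg (by omega)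
    simp [Fqwz, Gqwz, z1, z2, z3]
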